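/- arXiv:1805.03535 — 7 statements merged into one kernel-verified Lean document; each statement's English description precedes it below -/
import Mathlib

section
/- Let 0 < c_L < c_H < 1 and let p, m ∈ (0,1). Then the normalized energy-per-information ratio is minimized exactly when m = p: (i) if m < p then (p/m)·J(c_L, c_H, m) > J(c_L, c_H, p); (ii) if m > p then ((1−p)/(1−m))·J(c_L, c_H, m) > J(c_L, c_H, p); (iii) if m = p then the corresponding ratio (p/m)·J(c_L, c_H, m) equals J(c_L, c_H, p). (This is Theorem 1 of the paper: the minimum free energy per nat of the minimal molecular communication system is the Landauer energy kT, achieved when the reservoir fraction m equals the codebook probability p.) -/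
/-- Partial entropy function: φ(p) = p·log p for p > 0, φ(0) = 0. -/
noncomputable def phi (p : ℝ) : ℝ := if 0 < p then p * Real.log p else 0

/-- J(c_L, c_H, p) = p·φ(c_L) + (1−p)·φ(c_H) − φ(p·c_L + (1−p)·c_H). -/
noncomputable def J (cL cH p : ℝ) : ℝ :=
  p * phi cL + (1 - p) * phi cH - phi (p * cL + (1 - p) * cH)

lemma phi_pos_eq {x : ℝ} (hx : 0 < x) : phi x = x * Real.log x := if_pos hx

/-- strict concavity of J in its third argument, for points in [0,1]. -/
lemma J_strict_concave (cL cH : ℝ) (hcL : 0 < cL) (hLH : cL < cH)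
    {a b t : ℝ} (ha : 0 ≤ a) (ha1 : a ≤ 1) (hb : 0 ≤ b) (hb1 : b ≤ 1)
    (hab : a ≠ b) (ht0 : 0 < t) (ht1 : t < 1) :
    t * J cL cH a + (1 - t) * J cL cH b < J cL cH (t * a + (1 - t) * b) := by
  have hcH0 : 0 < cH := hcL.trans hLH
  -- mixtures
  set x := a * cL + (1 - a) * cH with hx
  set y := b * cL + (1 - b) * cH with hy
  have hxpos : 0 < x := by
    have h1 : 0 ≤ a * cL := mul_nonneg ha hcL.le
    have h2 : 0 ≤ (1 - a) * cH := mul_nonneg (by linarith) hcH0.le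
    rcases lt_or_ge a 1 with h | h
    · nlinarith
    · have : a = 1 := le_antisymm ha1 h
      simp [hx, this]; linarith
  have hypos : 0 < y := by
    have h1 : 0 ≤ b * cL := mul_nonneg hb hcL.le
    have h2 : 0 ≤ (1 - b) * cH := mul_nonneg (by linarith) hcH0.le
    rcases lt_or_ge b 1 with h | h
    · nlinarith
    · have : b = 1 := le_antisymm hb1 h
      simp [hy, this]; linarith
  have hxy : x ≠ y := by
    intro h
    apply hab
    have : (a - b) * (cL - cH) = 0 := by rw [hx, hy] at h; ring_nf; nlinarith [h]
    rcases mul_eq_zero.1 this with h' | h'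
    · linarith
    · exfalso; linarith
  have hconv := Real.strictConvexOn_mul_log.2 (Set.mem_Ici.2 hxpos.le)
    (Set.mem_Ici.2 hypos.le) hxy ht0 (by linarith : (0:ℝ) < 1 - t) (by ring)
  simp only [smul_eq_mul] at hconv
  have hmix : (t * a + (1 - t) * b) * cL + (1 - (t * a + (1 - t) * b)) * cH
      = t * x + (1 - t) * y := by rw [hx, hy]; ring
  have hmixpos : 0 < t * x + (1 - t) * y := by nlinarith
  simp only [J, hmix, ← hx, ← hy, phi_pos_eq hxpos, phi_pos_eq hypos, phi_pos_eq hmixpos]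
  nlinarith [hconv]

lemma J_zero (cL cH : ℝ) (hcH : 0 < cH) : J cL cH 0 = 0 := by
  simp [J, phi]

lemma J_one (cL cH : ℝ) (hcL : 0 < cL) : J cL cH 1 = 0 := by
  simp [J, phi]

/-- Theorem 1 of the paper: the normalized energy-per-information ratio is
minimized exactly at m = p (Landauer bound is achieved at m = p). -/
theorem landauer_minimum (cL cH p m : ℝ)
    (hcL : 0 < cL) (hLH : cL < cH) (hcH : cH < 1)
    (hp : p ∈ Set.Ioo (0 : ℝ) 1) (hm : m ∈ Set.Ioo (0 : ℝ) 1) :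
    (m < p → (p / m) * J cL cH m > J cL cH p) ∧
    (m > p → ((1 - p) / (1 - m)) * J cL cH m > J cL cH p) ∧
    (m = p → (p / m) * J cL cH m = J cL cH p) := by
  obtain ⟨hp0, hp1⟩ := hp
  obtain ⟨hm0, hm1⟩ := hm
  have hcH0 : 0 < cH := hcL.trans hLH
  refine ⟨?_, ?_, ?_⟩
  · intro hmp
    -- m = (m/p) * p + (1 - m/p) * 0
    have ht0 : 0 < m / p := div_pos hm0 hp0
    have ht1 : m / p < 1 := (div_lt_one hp0).2 hmp
    have := J_strict_concave cL cH hcL hLH hp0.le hp1.le le_rfl (by linarith : (0:ℝ) ≤ 1)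
      (by linarith : p ≠ 0) ht0 ht1
    rw [J_zero cL cH hcH0] at this
    have hm' : m / p * p + (1 - m / p) * 0 = m := by field_simp; ring
    rw [hm'] at this
    have h2 : m / p * J cL cH p < J cL cH m := by linarith
    have h3 := mul_lt_mul_of_pos_left h2 (div_pos hp0 hm0)
    have h4 : p / m * (m / p * J cL cH p) = J cL cH p := by field_simp
    rw [h4] at h3
    exact h3
  · intro hmp
    -- m = t * p + (1-t) * 1 with t = (1-m)/(1-p)
    have h1p : 0 < 1 - p := by linarith
    have h1m : 0 < 1 - m := by linarith
    have ht0 : 0 < (1 - m) / (1 - p) := div_pos h1m h1p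
    have ht1 : (1 - m) / (1 - p) < 1 := (div_lt_one h1p).2 (by linarith)
    have := J_strict_concave cL cH hcL hLH hp0.le hp1.le (by linarith : (0:ℝ) ≤ 1) le_rfl
      (by linarith : p ≠ 1) ht0 ht1
    rw [J_one cL cH hcL] at this
    have hm' : (1 - m) / (1 - p) * p + (1 - (1 - m) / (1 - p)) * 1 = m := by field_simp; ring
    rw [hm'] at this
    have h2 : (1 - m) / (1 - p) * J cL cH p < J cL cH m := by linarith
    have h3 := mul_lt_mul_of_pos_left h2 (div_pos h1p h1m)
    have h4 : (1 - p) / (1 - m) * ((1 - m) / (1 - p) * J cL cH p) = J cL cH p := by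
      field_simp
    rw [h4] at h3
    exact h3
  · intro h
    subst h
    rw [div_self (ne_of_gt hm0), one_mul]
end

section
/- Let 0 < c_L < c_H < 1. Then the function p ↦ J(c_L, c_H, p)/p is strictly decreasing on the interval (0, 1): for all 0 < p₁ < p₂ < 1, J(c_L, c_H, p₁)/p₁ > J(c_L, c_H, p₂)/p₂. -/
lemma phi_eq (p : ℝ) (hp : 0 < p) : phi p = p * Real.log p := by
  simp [phi, hp]

/-- The function p ↦ J(c_L, c_H, p)/p is strictly decreasing on (0, 1). -/
theorem J_div_p_strictAnti (cL cH : ℝ)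
    (hcL : 0 < cL) (hLH : cL < cH) (hcH : cH < 1) :
    ∀ p₁ p₂ : ℝ, 0 < p₁ → p₁ < p₂ → p₂ < 1 →
      J cL cH p₁ / p₁ > J cL cH p₂ / p₂ := by
  intro p₁ p₂ hp₁ h12 hp₂
  have hcH0 : 0 < cH := hcL.trans hLH
  set f : ℝ → ℝ := fun x => x * Real.log x with hf
  have hm : ∀ p : ℝ, 0 < p → p < 1 → 0 < p * cL + (1 - p) * cH := by
    intro p hp hp1
    have : 0 < 1 - p := by linarith
    positivity
  set t : ℝ := p₁ / p₂ with ht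
  have hp₂0 : 0 < p₂ := hp₁.trans h12
  have ht0 : 0 < t := div_pos hp₁ hp₂0
  have ht1 : t < 1 := (div_lt_one hp₂0).mpr h12
  have htp : t * p₂ = p₁ := div_mul_cancel₀ _ hp₂0.ne'
  -- strict convexity step
  have hne : cH ≠ p₂ * cL + (1 - p₂) * cH := by nlinarith
  have key := Real.strictConvexOn_mul_log.2 (Set.mem_Ici.mpr hcH0.le)
    (Set.mem_Ici.mpr (hm p₂ hp₂0 hp₂).le) hne (by linarith : (0:ℝ) < 1 - t) ht0
    (by ring)
  have harg : (1 - t) • cH + t • (p₂ * cL + (1 - p₂) * cH)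
      = p₁ * cL + (1 - p₁) * cH := by
    simp only [smul_eq_mul]
    nlinarith [htp]
  rw [harg] at key
  simp only [smul_eq_mul] at key
  -- rewrite phi as f at positive points
  have e1 := phi_eq cL hcL
  have e2 := phi_eq cH hcH0
  have e3 := phi_eq _ (hm p₁ hp₁ (h12.trans hp₂))
  have e4 := phi_eq _ (hm p₂ hp₂0 hp₂)
  have key2 := mul_lt_mul_of_pos_left key hp₂0
  have hkey3 : p₂ * ((1 - t) * (cH * Real.log cH)
      + t * ((p₂ * cL + (1 - p₂) * cH) * Real.log (p₂ * cL + (1 - p₂) * cH)))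
      = (p₂ - p₁) * (cH * Real.log cH)
      + p₁ * ((p₂ * cL + (1 - p₂) * cH) * Real.log (p₂ * cL + (1 - p₂) * cH)) := by
    linear_combination ((p₂ * cL + (1 - p₂) * cH) * Real.log (p₂ * cL + (1 - p₂) * cH)
      - cH * Real.log cH) * htp
  rw [hkey3] at key2
  rw [gt_iff_lt, div_lt_div_iff₀ hp₂0 hp₁]
  simp only [J, e1, e2, e3, e4]
  nlinarith [key2]
end

section
/- Let 0 < c_L < c_H < 1 and p ∈ (0, 1), let J'(p) denote the derivative of p ↦ J(c_L, c_H, p) at p, and set x = p·(1 − c_L/c_H), so that 0 < x < 1. Then p·J'(p) − J(c_L, c_H, p) = c_H·(x + log(1 − x)), and in particular p·J'(p) − J(c_L, c_H, p) < 0. Consequently the derivative of p ↦ J(c_L, c_H, p)/p at p, which equals (p·J'(p) − J(c_L, c_H, p))/p², is strictly negative. -/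
/-- With x = p·(1 − c_L/c_H) ∈ (0,1), the numerator p·J'(p) − J(p) of the
derivative of J(p)/p equals c_H·(x + log(1−x)) and is strictly negative; hence
the derivative of p ↦ J(p)/p, which equals (p·J'(p) − J(p))/p², is negative. -/
theorem J_div_p_deriv_neg (cL cH p x : ℝ)
    (hcL : 0 < cL) (hLH : cL < cH) (hcH : cH < 1)
    (hp : p ∈ Set.Ioo (0 : ℝ) 1)
    (hx : x = p * (1 - cL / cH)) :
    0 < x ∧ x < 1 ∧
    p * deriv (fun q => J cL cH q) p - J cL cH p = cH * (x + Real.log (1 - x)) ∧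
    p * deriv (fun q => J cL cH q) p - J cL cH p < 0 ∧
    deriv (fun q => J cL cH q / q) p
      = (p * deriv (fun q => J cL cH q) p - J cL cH p) / p ^ 2 ∧
    deriv (fun q => J cL cH q / q) p < 0 := by
  obtain ⟨hp0, hp1⟩ := hp
  have hcH0 : (0:ℝ) < cH := hcL.trans hLH
  have hm : 0 < p * cL + (1 - p) * cH :=
    add_pos (mul_pos hp0 hcL) (mul_pos (by linarith) hcH0)
  have hratio : cL / cH < 1 := (div_lt_one hcH0).2 hLH
  have hratio0 : 0 < cL / cH := div_pos hcL hcH0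
  have hx0 : 0 < x := by rw [hx]; exact mul_pos hp0 (by linarith)
  have hx1 : x < 1 := by
    rw [hx]; nlinarith
  have h1x : 1 - x = (p * cL + (1 - p) * cH) / cH := by
    rw [hx]; field_simp; ring
  have hcx : cH * x = p * (cH - cL) := by
    rw [hx]; field_simp
  -- derivative of J
  have hinner : HasDerivAt (fun q : ℝ => q * cL + (1 - q) * cH) (cL - cH) p := by
    have h := ((hasDerivAt_id p).mul_const cL).add
      (((hasDerivAt_const p (1:ℝ)).sub (hasDerivAt_id p)).mul_const cH)
    have e : cL - cH = 1 * cL + (0 - 1) * cH := by ring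
    rw [e]
    exact h
  have houter := Real.hasDerivAt_mul_log (ne_of_gt hm)
  have hcomp : HasDerivAt
      (fun q : ℝ => (q*cL+(1-q)*cH) * Real.log (q*cL+(1-q)*cH))
      ((Real.log (p * cL + (1 - p) * cH) + 1) * (cL - cH)) p := by
    have h' := houter.comp p hinner
    exact h'
  have hcont : ContinuousAt (fun q : ℝ => q * cL + (1 - q) * cH) p := by fun_prop
  have hev : ∀ᶠ q in nhds p, 0 < q * cL + (1 - q) * cH :=
    hcont.eventually (eventually_gt_nhds hm)
  have hphi_ev : (fun q : ℝ => phi (q*cL+(1-q)*cH)) =ᶠ[nhds p]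
      (fun q : ℝ => (q*cL+(1-q)*cH) * Real.log (q*cL+(1-q)*cH)) :=
    hev.mono fun q hq => by simp [phi, if_pos hq]
  have hphi : HasDerivAt (fun q : ℝ => phi (q*cL+(1-q)*cH))
      ((Real.log (p * cL + (1 - p) * cH) + 1) * (cL - cH)) p :=
    hcomp.congr_of_eventuallyEq hphi_ev
  have hJ : HasDerivAt (fun q => J cL cH q)
      (phi cL - phi cH - (cL - cH) * (Real.log (p * cL + (1 - p) * cH) + 1)) p := by
    have h := (((hasDerivAt_id p).mul_const (phi cL)).add
      (((hasDerivAt_const p (1:ℝ)).sub (hasDerivAt_id p)).mul_const (phi cH))).sub hphi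
    have e : phi cL - phi cH - (cL - cH) * (Real.log (p * cL + (1 - p) * cH) + 1)
        = 1 * phi cL + (0 - 1) * phi cH - (Real.log (p * cL + (1 - p) * cH) + 1) * (cL - cH) := by ring
    rw [e]
    exact h
  have hD : deriv (fun q => J cL cH q) p
      = phi cL - phi cH - (cL - cH) * (Real.log (p * cL + (1 - p) * cH) + 1) := hJ.deriv
  have hkey : p * deriv (fun q => J cL cH q) p - J cL cH p
      = cH * (x + Real.log (1 - x)) := by
    rw [hD, h1x, Real.log_div (ne_of_gt hm) (ne_of_gt hcH0)]
    simp only [J, phi, if_pos hcL, if_pos hcH0, if_pos hm]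
    linear_combination -hcx
  have hlog : Real.log (1 - x) < -x := by
    have h := Real.log_lt_sub_one_of_pos (by linarith : (0:ℝ) < 1 - x)
      (by intro h; apply ne_of_gt hx0; linarith)
    linarith
  have hneg : p * deriv (fun q => J cL cH q) p - J cL cH p < 0 := by
    rw [hkey]
    exact mul_neg_of_pos_of_neg hcH0 (by linarith)
  have hdiv : deriv (fun q => J cL cH q / q) p
      = (p * deriv (fun q => J cL cH q) p - J cL cH p) / p ^ 2 := by
    have h := (hJ.div (hasDerivAt_id p) (ne_of_gt hp0)).deriv
    rw [show (fun q => J cL cH q / q) = (fun q => J cL cH q) / id from rfl, h, hD]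
    simp only [id]
    ring
  refine ⟨hx0, hx1, hkey, hneg, hdiv, ?_⟩
  rw [hdiv]
  exact div_neg_of_neg_of_pos hneg (pow_pos hp0 2)
end

section
/- Let 0 < c_L < c_H < 1 and p ∈ (0, 1), let J'(p) denote the derivative of p ↦ J(c_L, c_H, p) at p, and set x = p·(1 − c_L/c_H), so that 0 < x < 1. Then p·J'(p) − J(c_L, c_H, p) = −c_H·∑_{i=2}^{∞} x^i / i, where the series on the right converges. -/
/-- With x = p·(1 − c_L/c_H), we have
p·J'(p) − J(p) = −c_H·∑_{i=2}^∞ x^i/i, the series being convergent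
(indexed here by i ↦ i + 2). -/
theorem J_div_p_numerator_series (cL cH p x : ℝ)
    (hcL : 0 < cL) (hLH : cL < cH) (hcH : cH < 1)
    (hp : p ∈ Set.Ioo (0 : ℝ) 1)
    (hx : x = p * (1 - cL / cH)) :
    (Summable fun i : ℕ => x ^ (i + 2) / (i + 2 : ℝ)) ∧
    p * deriv (fun q => J cL cH q) p - J cL cH p
      = -cH * ∑' i : ℕ, x ^ (i + 2) / (i + 2 : ℝ) := by
  obtain ⟨hp0, hp1⟩ := hp
  have hcH0 : (0:ℝ) < cH := hcL.trans hLH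
  set m : ℝ := p * cL + (1 - p) * cH with hm_def
  have hm : 0 < m := by
    have : 0 < 1 - p := by linarith
    positivity
  -- x bounds
  have hxpos : 0 < x := by
    rw [hx]
    have h1 : cL / cH < 1 := (div_lt_one hcH0).mpr hLH
    have h2 : 0 < 1 - cL / cH := by linarith
    positivity
  have hx1 : x < 1 := by
    rw [hx]
    have h1 : 0 < cL / cH := by positivity
    nlinarith
  have hxabs : |x| < 1 := by rw [abs_of_pos hxpos]; exact hx1
  -- series
  have hS := Real.hasSum_pow_div_log_of_abs_lt_one hxabs
  have hS2 : HasSum (fun n : ℕ => x ^ (n + 2) / (n + 2 : ℝ))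
      (-Real.log (1 - x) - x) := by
    have h2 := (hasSum_nat_add_iff' (f := fun n : ℕ => x ^ (n + 1) / (n + 1)) 1).mpr hS
    simp only [Finset.range_one, Finset.sum_singleton, pow_one, Nat.cast_zero, zero_add,
      div_one] at h2
    convert h2 using 2 with n
    · rfl
    push_cast
    ring_nf
  refine ⟨hS2.summable, ?_⟩
  rw [hS2.tsum_eq]
  -- 1 - x = m / cH
  have hmx : 1 - x = m / cH := by
    rw [hx, hm_def]
    field_simp
    ring
  have hlog : Real.log (1 - x) = Real.log m - Real.log cH := by
    rw [hmx, Real.log_div hm.ne' hcH0.ne']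
  -- derivative
  have hL : HasDerivAt (fun q : ℝ => q * cL + (1 - q) * cH) (cL - cH) p := by
    have := ((hasDerivAt_id p).mul_const cL).add
      (((hasDerivAt_const p (1:ℝ)).sub (hasDerivAt_id p)).mul_const cH)
    exact this.congr_deriv (by ring)
  have hmul : HasDerivAt (fun t : ℝ => t * Real.log t) (Real.log m + 1) m :=
    Real.hasDerivAt_mul_log hm.ne'
  have hcomp : HasDerivAt (fun q : ℝ => (q * cL + (1 - q) * cH) *
      Real.log (q * cL + (1 - q) * cH)) ((Real.log m + 1) * (cL - cH)) p :=
    by exact hmul.comp p hL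
  have hg : HasDerivAt (fun q : ℝ => q * phi cL + (1 - q) * phi cH -
      (q * cL + (1 - q) * cH) * Real.log (q * cL + (1 - q) * cH))
      (phi cL - phi cH - (Real.log m + 1) * (cL - cH)) p := by
    have := (((hasDerivAt_id p).mul_const (phi cL)).add
      (((hasDerivAt_const p (1:ℝ)).sub (hasDerivAt_id p)).mul_const (phi cH))).sub hcomp
    exact this.congr_deriv (by ring)
  have hev : (fun q => J cL cH q) =ᶠ[nhds p]
      (fun q : ℝ => q * phi cL + (1 - q) * phi cH -
        (q * cL + (1 - q) * cH) * Real.log (q * cL + (1 - q) * cH)) := by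
    have hcont : ContinuousAt (fun q : ℝ => q * cL + (1 - q) * cH) p := by fun_prop
    have hpos : ∀ᶠ q in nhds p, 0 < q * cL + (1 - q) * cH :=
      hcont.eventually (eventually_gt_nhds hm)
    filter_upwards [hpos] with q hq
    simp only [J, phi, if_pos hq]
  have hderiv : deriv (fun q => J cL cH q) p
      = phi cL - phi cH - (Real.log m + 1) * (cL - cH) := by
    rw [hev.deriv_eq, hg.deriv]
  rw [hderiv, hlog]
  simp only [J, phi, if_pos hcL, if_pos hcH0, if_pos hm, if_pos (show 0 < p * cL + (1 - p) * cH from hm), hx, hm_def]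
  field_simp
  ring
end

section
/- Let 0 < c_L < c_H < 1 and p ∈ (0, 1), let J'(p) denote the derivative of p ↦ J(c_L, c_H, p) at p, and set y = (1−p)·(c_H/c_L − 1), so that y > 0. Then (1−p)·J'(p) + J(c_L, c_H, p) = c_L·(y − log(1 + y)), and in particular (1−p)·J'(p) + J(c_L, c_H, p) > 0. Consequently the derivative of p ↦ J(c_L, c_H, p)/(1−p) at p, which equals ((1−p)·J'(p) + J(c_L, c_H, p))/(1−p)², is strictly positive. -/
/-- With y = (1−p)·(c_H/c_L − 1) > 0, the numerator (1−p)·J'(p) + J(p) of the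
derivative of J(p)/(1−p) equals c_L·(y − log(1+y)) and is strictly positive;
hence the derivative of p ↦ J(p)/(1−p), which equals
((1−p)·J'(p) + J(p))/(1−p)², is positive. -/
theorem J_div_one_sub_p_deriv_pos (cL cH p y : ℝ)
    (hcL : 0 < cL) (hLH : cL < cH) (hcH : cH < 1)
    (hp : p ∈ Set.Ioo (0 : ℝ) 1)
    (hy : y = (1 - p) * (cH / cL - 1)) :
    0 < y ∧
    (1 - p) * deriv (fun q => J cL cH q) p + J cL cH p
      = cL * (y - Real.log (1 + y)) ∧
    0 < (1 - p) * deriv (fun q => J cL cH q) p + J cL cH p ∧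
    deriv (fun q => J cL cH q / (1 - q)) p
      = ((1 - p) * deriv (fun q => J cL cH q) p + J cL cH p) / (1 - p) ^ 2 ∧
    0 < deriv (fun q => J cL cH q / (1 - q)) p := by
  obtain ⟨hp0, hp1⟩ := hp
  have hcH0 : (0:ℝ) < cH := hcL.trans hLH
  have hmpos : 0 < p * cL + (1 - p) * cH := by nlinarith
  have hcont : Continuous fun q : ℝ => q * cL + (1 - q) * cH := by continuity
  have hev : (fun q => J cL cH q) =ᶠ[nhds p]
      fun q => q * phi cL + (1 - q) * phi cH -
        ((q * cL + (1 - q) * cH) * Real.log (q * cL + (1 - q) * cH)) := by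
    have h : ∀ᶠ q in nhds p, 0 < q * cL + (1 - q) * cH :=
      (hcont.tendsto p).eventually (eventually_gt_nhds hmpos)
    filter_upwards [h] with q hq
    simp only [J, phi, if_pos hq]
  have hm' : HasDerivAt (fun q : ℝ => q * cL + (1 - q) * cH) (cL - cH) p := by
    have := ((hasDerivAt_id p).mul_const cL).add
      (((hasDerivAt_const p (1:ℝ)).sub (hasDerivAt_id p)).mul_const cH)
    exact this.congr_deriv (by ring)
  have hlog : HasDerivAt (fun x : ℝ => x * Real.log x)
      (Real.log (p * cL + (1 - p) * cH) + 1) (p * cL + (1 - p) * cH) :=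
    Real.hasDerivAt_mul_log hmpos.ne'
  have hcomp : HasDerivAt
      (fun q => (q * cL + (1 - q) * cH) * Real.log (q * cL + (1 - q) * cH))
      ((Real.log (p * cL + (1 - p) * cH) + 1) * (cL - cH)) p := by
    have := hlog.comp p hm'
    exact this
  have hf : HasDerivAt
      (fun q => q * phi cL + (1 - q) * phi cH -
        ((q * cL + (1 - q) * cH) * Real.log (q * cL + (1 - q) * cH)))
      (phi cL - phi cH - (Real.log (p * cL + (1 - p) * cH) + 1) * (cL - cH)) p := by
    have := (((hasDerivAt_id p).mul_const (phi cL)).add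
      (((hasDerivAt_const p (1:ℝ)).sub (hasDerivAt_id p)).mul_const (phi cH))).sub hcomp
    exact this.congr_deriv (by ring)
  have hJ : HasDerivAt (fun q => J cL cH q)
      (phi cL - phi cH - (Real.log (p * cL + (1 - p) * cH) + 1) * (cL - cH)) p :=
    hf.congr_of_eventuallyEq hev
  have hderivJ : deriv (fun q => J cL cH q) p
      = phi cL - phi cH - (Real.log (p * cL + (1 - p) * cH) + 1) * (cL - cH) := hJ.deriv
  have h1p : (1:ℝ) - p ≠ 0 := by linarith
  have hypos : 0 < y := by
    rw [hy]
    have : 1 < cH / cL := (one_lt_div hcL).2 hLH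
    nlinarith
  have h1y : 1 + y = (p * cL + (1 - p) * cH) / cL := by
    rw [hy]; field_simp; ring
  have hlog1y : Real.log (1 + y)
      = Real.log (p * cL + (1 - p) * cH) - Real.log cL := by
    rw [h1y, Real.log_div hmpos.ne' hcL.ne']
  have hkey : (1 - p) * deriv (fun q => J cL cH q) p + J cL cH p
      = cL * (y - Real.log (1 + y)) := by
    rw [hderivJ, hlog1y, hy]
    simp only [J, phi, if_pos hmpos, if_pos hcL, if_pos hcH0]
    field_simp
    ring
  have hnum : 0 < (1 - p) * deriv (fun q => J cL cH q) p + J cL cH p := by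
    rw [hkey]
    have hlt : Real.log (1 + y) < 1 + y - 1 :=
      Real.log_lt_sub_one_of_pos (by linarith) (by linarith)
    have : Real.log (1 + y) < y := by linarith
    nlinarith
  have hg : HasDerivAt (fun q : ℝ => 1 - q) (0 - 1) p :=
    (hasDerivAt_const p (1:ℝ)).sub (hasDerivAt_id p)
  have hdiv := hJ.div hg h1p
  have hderiv_eq : deriv (fun q => J cL cH q / (1 - q)) p
      = ((1 - p) * deriv (fun q => J cL cH q) p + J cL cH p) / (1 - p) ^ 2 := by
    rw [show (fun q => J cL cH q / (1 - q)) = (fun q => J cL cH q) / (fun q => 1 - q) from rfl, hdiv.deriv, hderivJ]; ring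
  refine ⟨hypos, hkey, hnum, hderiv_eq, ?_⟩
  rw [hderiv_eq]
  exact div_pos hnum (by positivity)
end

section
/- Let 0 < c_L < c_H < 1 and p ∈ (0, 1), let J'(p) denote the derivative of p ↦ J(c_L, c_H, p) at p, and set y = (1−p)·(c_H/c_L − 1). If y < 1, then (1−p)·J'(p) + J(c_L, c_H, p) = c_L·∑_{i=2}^{∞} (−1)^i · y^i / i, where the series on the right converges. -/
/-- With y = (1−p)·(c_H/c_L − 1), if y < 1 then
(1−p)·J'(p) + J(p) = c_L·∑_{i=2}^∞ (−1)^i·y^i/i, the series being convergent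
(indexed here by i ↦ i + 2). -/
theorem J_div_one_sub_p_numerator_series (cL cH p y : ℝ)
    (hcL : 0 < cL) (hLH : cL < cH) (hcH : cH < 1)
    (hp : p ∈ Set.Ioo (0 : ℝ) 1)
    (hy : y = (1 - p) * (cH / cL - 1))
    (hy1 : y < 1) :
    (Summable fun i : ℕ => (-1 : ℝ) ^ (i + 2) * y ^ (i + 2) / (i + 2 : ℝ)) ∧
    (1 - p) * deriv (fun q => J cL cH q) p + J cL cH p
      = cL * ∑' i : ℕ, (-1 : ℝ) ^ (i + 2) * y ^ (i + 2) / (i + 2 : ℝ) := by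
  obtain ⟨hp0, hp1⟩ := hp
  have hy0 : 0 < y := by
    rw [hy]
    have h1 : (1:ℝ) < cH / cL := (one_lt_div hcL).2 hLH
    have : 0 < 1 - p := by linarith
    nlinarith
  have h1y : (0:ℝ) < 1 + y := by linarith
  have hcH0 : 0 < cH := hcL.trans hLH
  -- series part
  have habs : |(-y)| < 1 := by rw [abs_neg, abs_of_pos hy0]; exact hy1
  have hs : HasSum (fun n : ℕ => (-y) ^ (n + 1) / (n + 1)) (-Real.log (1 - (-y))) :=
    Real.hasSum_pow_div_log_of_abs_lt_one habs
  have hs2 := (hasSum_nat_add_iff'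
      (f := fun n : ℕ => (-y) ^ (n + 1) / ((n : ℝ) + 1)) 1).mpr hs
  have hfun : (fun i : ℕ => (-1 : ℝ) ^ (i + 2) * y ^ (i + 2) / (i + 2 : ℝ))
      = fun n : ℕ => (-y) ^ (n + 1 + 1) / ((n + 1 : ℕ) + 1 : ℝ) := by
    funext n
    rw [neg_pow]
    push_cast
    ring_nf
  have hs3 : HasSum (fun i : ℕ => (-1 : ℝ) ^ (i + 2) * y ^ (i + 2) / (i + 2 : ℝ))
      (y - Real.log (1 + y)) := by
    rw [hfun]
    convert hs2 using 1
    · rfl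
    simp [sub_neg_eq_add]
    try ring
  refine ⟨hs3.summable, ?_⟩
  rw [hs3.tsum_eq]
  -- derivative part
  set m := p * cL + (1 - p) * cH with hm
  have hmpos : 0 < m := by
    have h1 := mul_pos hp0 hcL
    have h2 := mul_pos (sub_pos.2 hp1) hcH0
    rw [hm]; linarith
  have hmy : m = cL * (1 + y) := by
    rw [hm, hy]; field_simp; ring
  have hmd : HasDerivAt (fun q : ℝ => q * cL + (1 - q) * cH) (cL - cH) p := by
    have h := ((hasDerivAt_id p).mul_const cL).add
      (((hasDerivAt_const p (1:ℝ)).sub (hasDerivAt_id p)).mul_const cH)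
    exact h.congr_deriv (by ring)
  have hlog : HasDerivAt (fun x : ℝ => x * Real.log x) (Real.log m + 1) m :=
    Real.hasDerivAt_mul_log hmpos.ne'
  have hcomp : HasDerivAt (fun q : ℝ => (q * cL + (1 - q) * cH) * Real.log (q * cL + (1 - q) * cH))
      ((Real.log m + 1) * (cL - cH)) p := by have := hlog.comp p hmd; exact this
  have hlin : HasDerivAt (fun q : ℝ => q * phi cL + (1 - q) * phi cH) (phi cL - phi cH) p := by
    have h := ((hasDerivAt_id p).mul_const (phi cL)).add
      (((hasDerivAt_const p (1:ℝ)).sub (hasDerivAt_id p)).mul_const (phi cH))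
    exact h.congr_deriv (by ring)
  have hg : HasDerivAt (fun q : ℝ => q * phi cL + (1 - q) * phi cH
      - (q * cL + (1 - q) * cH) * Real.log (q * cL + (1 - q) * cH))
      (phi cL - phi cH - (Real.log m + 1) * (cL - cH)) p := hlin.sub hcomp
  have hev : (fun q => J cL cH q) =ᶠ[nhds p] (fun q : ℝ => q * phi cL + (1 - q) * phi cH
      - (q * cL + (1 - q) * cH) * Real.log (q * cL + (1 - q) * cH)) := by
    have hcont : ContinuousAt (fun q : ℝ => q * cL + (1 - q) * cH) p := by fun_prop
    filter_upwards [hcont.eventually (eventually_gt_nhds hmpos)] with q hq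
    simp only [J, phi, if_pos hq]
  have hJ' : HasDerivAt (fun q => J cL cH q)
      (phi cL - phi cH - (Real.log m + 1) * (cL - cH)) p :=
    hg.congr_of_eventuallyEq hev
  rw [hJ'.deriv]
  have hJp : J cL cH p = p * (cL * Real.log cL) + (1 - p) * (cH * Real.log cH)
      - m * Real.log m := by
    simp only [J, phi, if_pos hcL, if_pos hcH0, if_pos (show 0 < p * cL + (1 - p) * cH from hmpos), hm]
  rw [hJp]
  simp only [phi, if_pos hcL, if_pos hcH0]
  have hlogm : Real.log m = Real.log cL + Real.log (1 + y) :=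
    by rw [hmy, Real.log_mul hcL.ne' h1y.ne']
  have key : (1 - p) * (cH - cL) = cL * y := by
    rw [hy]; field_simp
    try ring
  rw [hlogm, hmy]
  linear_combination (Real.log cL + Real.log (1 + y) + 1) * key
end

section
/- Let 0 < c_L < c_H < 1 and let n_L, n_H > 0 be real numbers, and set c = (n_L·c_L + n_H·c_H)/(n_L + n_H). Then the free-energy integral evaluates in closed form: ∫_{0}^{c_H − c} log((c + χ)/(c − (n_H/n_L)·χ)) dχ = −(1 + n_L/n_H)·c·log c + c_H·log c_H + (n_L/n_H)·c_L·log c_L. (Note that the integrand is well defined on the interval of integration since c − (n_H/n_L)·χ ≥ c_L > 0 for 0 ≤ χ ≤ c_H − c.) -/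
open intervalIntegral Real

/-- Closed form of the free-energy integral (eqn (19) of the paper):
∫₀^{c_H−c} log((c+χ)/(c − (n_H/n_L)χ)) dχ
  = −(1 + n_L/n_H)·c·log c + c_H·log c_H + (n_L/n_H)·c_L·log c_L,
where c = (n_L c_L + n_H c_H)/(n_L + n_H). -/
theorem free_energy_integral (cL cH nL nH c : ℝ)
    (hcL : 0 < cL) (hLH : cL < cH) (hcH : cH < 1)
    (hnL : 0 < nL) (hnH : 0 < nH)
    (hc : c = (nL * cL + nH * cH) / (nL + nH)) :
    ∫ χ in (0 : ℝ)..(cH - c), Real.log ((c + χ) / (c - (nH / nL) * χ))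
      = -(1 + nL / nH) * c * Real.log c + cH * Real.log cH
        + (nL / nH) * (cL * Real.log cL) := by
  have hsum : 0 < nL + nH := by linarith
  have hcc : c * (nL + nH) = nL * cL + nH * cH := by
    rw [hc]; field_simp
  set r : ℝ := nH / nL with hr
  have hrpos : 0 < r := div_pos hnH hnL
  have hcLc : cL < c := by
    nlinarith [mul_pos hnH (sub_pos.mpr hLH)]
  have hccH : c < cH := by
    nlinarith [mul_pos hnL (sub_pos.mpr hLH)]
  have hcpos : 0 < c := lt_trans hcL hcLc
  have ha : 0 < cH - c := sub_pos.mpr hccH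
  have hkey : c - r * (cH - c) = cL := by
    rw [hr]; field_simp; nlinarith [hcc]
  -- positivity bounds on the interval
  have hlow : ∀ χ ∈ Set.uIcc (0:ℝ) (cH - c), 0 < c - r * χ := by
    intro χ hχ
    rw [Set.uIcc_of_le (le_of_lt ha)] at hχ
    have h1 : r * χ ≤ r * (cH - c) := mul_le_mul_of_nonneg_left hχ.2 (le_of_lt hrpos)
    nlinarith [hkey]
  have hup : ∀ χ ∈ Set.uIcc (0:ℝ) (cH - c), 0 < c + χ := by
    intro χ hχ
    rw [Set.uIcc_of_le (le_of_lt ha)] at hχ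
    linarith [hχ.1]
  -- rewrite the integrand as a difference of logs
  have hcongr : ∫ χ in (0:ℝ)..(cH - c), Real.log ((c + χ) / (c - r * χ))
      = ∫ χ in (0:ℝ)..(cH - c), (Real.log (c + χ) - Real.log (c - r * χ)) := by
    apply intervalIntegral.integral_congr
    intro χ hχ
    exact Real.log_div (ne_of_gt (hup χ hχ)) (ne_of_gt (hlow χ hχ))
  have hi1 : IntervalIntegrable (fun χ => Real.log (c + χ)) MeasureTheory.volume 0 (cH - c) := by
    apply ContinuousOn.intervalIntegrable
    exact ContinuousOn.log (continuous_const.add continuous_id).continuousOn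
      fun χ hχ => ne_of_gt (hup χ hχ)
  have hi2 : IntervalIntegrable (fun χ => Real.log (c - r * χ)) MeasureTheory.volume 0 (cH - c) := by
    apply ContinuousOn.intervalIntegrable
    exact ContinuousOn.log (continuous_const.sub (continuous_const.mul continuous_id)).continuousOn
      fun χ hχ => ne_of_gt (hlow χ hχ)
  -- first integral
  have hI1 : ∫ χ in (0:ℝ)..(cH - c), Real.log (c + χ)
      = cH * Real.log cH - c * Real.log c - cH + c := by
    have := intervalIntegral.integral_comp_add_left (a := (0:ℝ)) (b := cH - c) Real.log c
    rw [this]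
    rw [integral_log]
    ring_nf
  -- second integral
  have hI2 : ∫ χ in (0:ℝ)..(cH - c), Real.log (c - r * χ)
      = (-r)⁻¹ * (cL * Real.log cL - c * Real.log c - cL + c) := by
    have hrne : (-r) ≠ 0 := neg_ne_zero.mpr (ne_of_gt hrpos)
    have h0 : (fun χ => Real.log (c - r * χ)) = fun χ => Real.log ((-r) * χ + c) := by
      funext χ; ring_nf
    rw [h0, intervalIntegral.integral_comp_mul_add Real.log hrne c]
    rw [show (-r) * 0 + c = c by ring, show (-r) * (cH - c) + c = cL by
      rw [← hkey]; ring]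
    rw [integral_log]
    simp [smul_eq_mul]
  rw [hcongr, intervalIntegral.integral_sub hi1 hi2, hI1, hI2]
  have hzero : nH * (c - cH) + nL * (c - cL) = 0 := by nlinarith [hcc]
  have hs : (-r)⁻¹ = -(nL/nH) := by rw [hr, inv_neg, inv_div]
  rw [hs]
  have hz2 : (c - cH) + (nL/nH)*(c - cL) = 0 := by
    field_simp
    linarith [hzero]
  linear_combination hz2
end
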